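/- Let U, V be unitary operators on H_s ⊗ H_e (finite-dimensional). Then the partial trace over H_e satisfies Tr_e(U ρ U†) = Tr_e(V ρ V†) for all density matrices ρ on H_s ⊗ H_e if and only if U = (1_s ⊗ Φ) V for some unitary Φ on H_e. -/

import Mathlib

open Matrix Kronecker
open scoped ComplexOrder

/-- Hilbert–Schmidt (Frobenius) norm of a complex square matrix. -/
noncomputable def hsNorm {k : Type*} [Fintype k] (M : Matrix k k ℂ) : ℝ :=
  Real.sqrt (Matrix.trace (Mᴴ * M)).re

/-- Trace norm: trace of the positive-semidefinite square root of `Mᴴ * M`. -/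
noncomputable def traceNorm {k : Type*} [Fintype k] [DecidableEq k] (M : Matrix k k ℂ) : ℝ :=
  (Matrix.trace
    (((Matrix.PosSemidef.isHermitian (Matrix.posSemidef_conjTranspose_mul_self M)).eigenvectorUnitary : Matrix k k ℂ) *
      Matrix.diagonal ((RCLike.ofReal : ℝ → ℂ) ∘ Real.sqrt ∘
        (Matrix.PosSemidef.isHermitian (Matrix.posSemidef_conjTranspose_mul_self M)).eigenvalues) *
      (star (Matrix.PosSemidef.isHermitian (Matrix.posSemidef_conjTranspose_mul_self M)).eigenvectorUnitary :
        Matrix k k ℂ))).re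

/-- Induced two-norm: the largest singular value of `M`. -/
noncomputable def twoNorm {k : Type*} [Fintype k] [DecidableEq k] (M : Matrix k k ℂ) : ℝ :=
  ⨆ i, Real.sqrt
    ((Matrix.PosSemidef.isHermitian
      (Matrix.posSemidef_conjTranspose_mul_self M)).eigenvalues i)

/-- Partial trace over the environment factor `e`. -/
noncomputable def ptraceE {s e : Type*} [Fintype s] [Fintype e]
    (M : Matrix (s × e) (s × e) ℂ) : Matrix s s ℂ :=
  Matrix.of fun i j => ∑ ν : e, M (i, ν) (j, ν)

/-- Partial trace over the system factor `s`. -/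
noncomputable def ptraceS {s e : Type*} [Fintype s] [Fintype e]
    (M : Matrix (s × e) (s × e) ℂ) : Matrix e e ℂ :=
  Matrix.of fun μ ν => ∑ i : s, M (i, μ) (i, ν)

/-- A density matrix: positive semidefinite with unit trace. -/
def IsDensity {k : Type*} [Fintype k] (ρ : Matrix k k ℂ) : Prop :=
  ρ.PosSemidef ∧ Matrix.trace ρ = 1

set_option linter.unusedSectionVars false

section Helpers
variable {s e : Type*} [Fintype s] [Fintype e] [DecidableEq s] [DecidableEq e]

/-- outer product |x⟩⟨x| -/
noncomputable def outer {k : Type*} [Fintype k] (x : k → ℂ) : Matrix k k ℂ :=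
  Matrix.of fun i j => x i * star (x j)

lemma outer_posSemidef {k : Type*} [Fintype k] (x : k → ℂ) : (outer x).PosSemidef := by
  rw [posSemidef_iff_dotProduct_mulVec]
  constructor
  · ext i j
    simp [outer, conjTranspose_apply, mul_comm]
  · intro y
    have h1 : ∀ i, (outer x *ᵥ y) i = x i * (∑ j, star (x j) * y j) := by
      intro i
      simp [outer, mulVec, dotProduct, Finset.mul_sum, mul_assoc]
    have : dotProduct (star y) (outer x *ᵥ y) =
        star (∑ j, star (x j) * y j) * (∑ j, star (x j) * y j) := by
      simp only [dotProduct, h1, Pi.star_apply]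
      rw [star_sum, Finset.sum_mul]
      apply Finset.sum_congr rfl
      intro i _
      rw [star_mul', star_star]
      ring
    rw [this]
    exact star_mul_self_nonneg _

lemma trace_outer {k : Type*} [Fintype k] (x : k → ℂ) :
    Matrix.trace (outer x) = ∑ i, x i * star (x i) := by
  simp [Matrix.trace, outer, Matrix.diag]

lemma conj_outer {k : Type*} [Fintype k] (W : Matrix k k ℂ) (x : k → ℂ) :
    W * outer x * Wᴴ = outer (W *ᵥ x) := by
  ext i j
  simp only [outer, mul_apply, of_apply, conjTranspose_apply, mulVec, dotProduct, star_sum,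
    star_mul']
  have h2 : ∀ l, (∑ m, W i m * (x m * star (x l))) = (∑ m, W i m * x m) * star (x l) := by
    intro l
    rw [Finset.sum_mul]
    exact Finset.sum_congr rfl fun m _ => by ring
  simp only [h2]
  rw [Finset.mul_sum]
  apply Finset.sum_congr rfl
  intro l _
  ring

lemma ptraceE_conj_kron {s e : Type*} [Fintype s] [Fintype e] [DecidableEq s] [DecidableEq e]
    (Φ : Matrix e e ℂ) (hΦ : Φᴴ * Φ = 1) (M : Matrix (s × e) (s × e) ℂ) :
    ptraceE (((1 : Matrix s s ℂ) ⊗ₖ Φ) * M * ((1 : Matrix s s ℂ) ⊗ₖ Φ)ᴴ) = ptraceE M := by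
  ext i j
  simp only [ptraceE, of_apply]
  have hL : ∀ (ν : e) (q : s × e), (((1 : Matrix s s ℂ) ⊗ₖ Φ) * M) (i, ν) q
      = ∑ μ : e, Φ ν μ * M (i, μ) q := by
    intro ν q
    rw [mul_apply, Fintype.sum_prod_type]
    simp [kroneckerMap_apply, one_apply, ite_mul]
  have key : ∀ ν : e,
      (((1 : Matrix s s ℂ) ⊗ₖ Φ) * M * ((1 : Matrix s s ℂ) ⊗ₖ Φ)ᴴ) (i, ν) (j, ν)
      = ∑ μ' : e, ∑ μ : e, Φ ν μ * M (i, μ) (j, μ') * star (Φ ν μ') := by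
    intro ν
    rw [mul_apply, Fintype.sum_prod_type]
    simp only [hL, conjTranspose_apply, kroneckerMap_apply, one_apply, star_mul', apply_ite,
      star_one, star_zero, ite_mul, one_mul, zero_mul, mul_ite, mul_zero, mul_one]
    rw [show (∑ x : s, ∑ x_1 : e, if j = x then (∑ μ : e, Φ ν μ * M (i, μ) (x, x_1)) * star (Φ ν x_1) else 0)
        = ∑ x : s, if j = x then ∑ x_1 : e, (∑ μ : e, Φ ν μ * M (i, μ) (x, x_1)) * star (Φ ν x_1) else 0 from
      Finset.sum_congr rfl fun x _ => by split <;> simp]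
    rw [Finset.sum_ite_eq, if_pos (Finset.mem_univ j)]
    apply Finset.sum_congr rfl
    intro μ' _
    rw [Finset.sum_mul]
  simp only [key]
  rw [Finset.sum_comm]
  have hswap : ∀ μ' : e, ∑ ν : e, ∑ μ : e, Φ ν μ * M (i, μ) (j, μ') * star (Φ ν μ')
      = ∑ μ : e, M (i, μ) (j, μ') * (Φᴴ * Φ) μ' μ := by
    intro μ'
    rw [Finset.sum_comm]
    apply Finset.sum_congr rfl
    intro μ _
    rw [mul_apply, Finset.mul_sum]
    apply Finset.sum_congr rfl
    intro ν _
    rw [conjTranspose_apply]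
    ring
  simp only [hswap, hΦ, one_apply, mul_ite, mul_one, mul_zero]
  simp [Finset.sum_ite_eq]


/-- Step extraction: scalar version of the invariance hypothesis. -/
lemma hB_of_hA {W : Matrix (s × e) (s × e) ℂ}
    (hA : ∀ ρ : Matrix (s × e) (s × e) ℂ, IsDensity ρ → ptraceE (W * ρ * Wᴴ) = ptraceE ρ)
    (x : (s × e) → ℂ) (hx : (∑ p, x p * star (x p)) = 1) (i j : s) :
    ∑ ν : e, (W *ᵥ x) (i, ν) * star ((W *ᵥ x) (j, ν)) = ∑ ν : e, x (i, ν) * star (x (j, ν)) := by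
  have hd : IsDensity (outer x) := ⟨outer_posSemidef x, (trace_outer x).trans hx⟩
  have h1 := hA (outer x) hd
  rw [conj_outer] at h1
  have h2 := Matrix.ext_iff.mpr h1 i j
  simpa [ptraceE, outer] using h2

/-- zero blocks of W -/
lemma hzero_of_hA {W : Matrix (s × e) (s × e) ℂ}
    (hA : ∀ ρ : Matrix (s × e) (s × e) ℂ, IsDensity ρ → ptraceE (W * ρ * Wᴴ) = ptraceE ρ)
    (i j : s) (μ ν : e) (hij : j ≠ i) : W (j, ν) (i, μ) = 0 := by
  set x : (s × e) → ℂ := fun p => if p = (i, μ) then 1 else 0 with hxdef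
  have hx : (∑ p, x p * star (x p)) = 1 := by
    simp [hxdef, ite_mul, Finset.sum_ite_eq']
  have hWx : ∀ q, (W *ᵥ x) q = W q (i, μ) := by
    intro q
    simp [hxdef, mulVec, dotProduct, mul_ite, Finset.sum_ite_eq']
  have hb := hB_of_hA hA x hx j j
  simp only [hWx] at hb
  have hrhs : ∑ ν' : e, x (j, ν') * star (x (j, ν')) = 0 := by
    apply Finset.sum_eq_zero
    intro ν' _
    have : (j, ν') ≠ (i, μ) := by
      intro hcon
      exact hij (congrArg Prod.fst hcon)
    simp [hxdef, this]
  rw [hrhs] at hb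
  have hterm := (Finset.sum_eq_zero_iff_of_nonneg
    (fun ν' _ => mul_star_self_nonneg (W (j, ν') (i, μ)))).mp hb ν (Finset.mem_univ ν)
  rcases mul_eq_zero.mp hterm with h | h
  · exact h
  · simpa using h

/-- restricted column orthonormality -/
lemma hcol2 {W : Matrix (s × e) (s × e) ℂ} (hW2 : Wᴴ * W = 1)
    (hz : ∀ (i j : s) (μ ν : e), j ≠ i → W (j, ν) (i, μ) = 0)
    (i : s) (μ μ' : e) :
    ∑ ν : e, star (W (i, ν) (i, μ)) * W (i, ν) (i, μ') = if μ = μ' then 1 else 0 := by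
  have h1 : (Wᴴ * W) (i, μ) (i, μ') = if μ = μ' then 1 else 0 := by
    rw [hW2, one_apply]
    by_cases h : μ = μ' <;> simp [h, Prod.ext_iff]
  rw [mul_apply, Fintype.sum_prod_type] at h1
  rw [← h1]
  rw [Finset.sum_eq_single_of_mem i (Finset.mem_univ i)
    (fun j _ hj => Finset.sum_eq_zero fun ν _ => by rw [hz i j μ' ν hj, mul_zero])]
  exact Finset.sum_congr rfl fun ν _ => by rw [conjTranspose_apply]

/-- diagonal blocks agree -/
lemma hsame_of_hA {W : Matrix (s × e) (s × e) ℂ}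
    (hA : ∀ ρ : Matrix (s × e) (s × e) ℂ, IsDensity ρ → ptraceE (W * ρ * Wᴴ) = ptraceE ρ)
    (hW2 : Wᴴ * W = 1) (i i0 : s) (μ ν : e) :
    W (i, ν) (i, μ) = W (i0, ν) (i0, μ) := by
  by_cases hii : i = i0
  · rw [hii]
  have hz := hzero_of_hA hA
  set a : e → ℂ := fun ν' => W (i, ν') (i, μ) with hadef
  set b : e → ℂ := fun ν' => W (i0, ν') (i0, μ) with hbdef
  have haa : ∑ ν' : e, a ν' * star (a ν') = 1 := by
    have := hcol2 hW2 hz i μ μ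
    rw [if_pos rfl] at this
    rw [← this]
    exact Finset.sum_congr rfl fun ν' _ => mul_comm _ _
  have hbb : ∑ ν' : e, b ν' * star (b ν') = 1 := by
    have := hcol2 hW2 hz i0 μ μ
    rw [if_pos rfl] at this
    rw [← this]
    exact Finset.sum_congr rfl fun ν' _ => mul_comm _ _
  -- the superposition state
  set c : ℂ := Complex.ofReal (Real.sqrt 2)⁻¹ with hcdef
  have hcstar : star c = c := by simp [hcdef]
  have hcc : c * c = 1 / 2 := by
    rw [hcdef]
    rw [← Complex.ofReal_mul]
    rw [← mul_inv, Real.mul_self_sqrt (by norm_num)]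
    norm_num
  have hne : (i, μ) ≠ (i0, μ) := fun hcon => hii (congrArg Prod.fst hcon)
  set x : (s × e) → ℂ := fun p => if p = (i, μ) then c else if p = (i0, μ) then c else 0
    with hxdef
  have hpt : ∀ p, x p * star (x p) =
      (if p = (i, μ) then (1 : ℂ) / 2 else 0) + (if p = (i0, μ) then (1 : ℂ) / 2 else 0) := by
    intro p
    by_cases h1 : p = (i, μ)
    · have h2 : p ≠ (i0, μ) := h1 ▸ hne
      simp [hxdef, h1, h2, hcstar, hcc, hii]
    · by_cases h2 : p = (i0, μ)
      · simp [hxdef, h1, h2, hcstar, hcc, Ne.symm hii]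
      · simp [hxdef, h1, h2]
  have hx : (∑ p, x p * star (x p)) = 1 := by
    simp only [hpt]
    rw [Finset.sum_add_distrib, Finset.sum_ite_eq', Finset.sum_ite_eq']
    norm_num
  have hWx : ∀ q, (W *ᵥ x) q = W q (i, μ) * c + W q (i0, μ) * c := by
    intro q
    have : ∀ p, W q p * x p =
        (if p = (i, μ) then W q (i, μ) * c else 0) +
        (if p = (i0, μ) then W q (i0, μ) * c else 0) := by
      intro p
      by_cases h1 : p = (i, μ)
      · have h2 : p ≠ (i0, μ) := h1 ▸ hne
        simp [hxdef, h1, h2, hii]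
      · by_cases h2 : p = (i0, μ)
        · simp [hxdef, h1, h2, Ne.symm hii]
        · simp [hxdef, h1, h2]
    simp only [mulVec, dotProduct, this]
    rw [Finset.sum_add_distrib, Finset.sum_ite_eq', Finset.sum_ite_eq']
    simp
  have hb := hB_of_hA hA x hx i i0
  have hLHS : ∀ ν' : e, (W *ᵥ x) (i, ν') * star ((W *ᵥ x) (i0, ν'))
      = a ν' * star (b ν') * (1 / 2) := by
    intro ν'
    rw [hWx, hWx]
    rw [hz i0 i μ ν' hii, hz i i0 μ ν' (Ne.symm hii)]
    simp only [zero_mul, add_zero, zero_add]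
    rw [star_mul', hcstar]
    rw [show W (i, ν') (i, μ) * c * (star (W (i0, ν') (i0, μ)) * c)
        = W (i, ν') (i, μ) * star (W (i0, ν') (i0, μ)) * (c * c) by ring, hcc]
  have hRHS : ∑ ν' : e, x (i, ν') * star (x (i0, ν')) = 1 / 2 := by
    have hx1 : ∀ ν' : e, x (i, ν') = if ν' = μ then c else 0 := by
      intro ν'
      by_cases h : ν' = μ
      · simp [hxdef, h]
      · have h1 : (i, ν') ≠ (i, μ) := fun hcon => h (congrArg Prod.snd hcon)
        have h2 : (i, ν') ≠ (i0, μ) := fun hcon => hii (congrArg Prod.fst hcon)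
        simp [hxdef, h1, h2, h]
    have hx2 : ∀ ν' : e, x (i0, ν') = if ν' = μ then c else 0 := by
      intro ν'
      by_cases h : ν' = μ
      · have h1 : (i0, ν') ≠ (i, μ) := fun hcon => hii (congrArg Prod.fst hcon).symm
        simp [hxdef, h1, h]
      · have h1 : (i0, ν') ≠ (i, μ) := fun hcon => hii (congrArg Prod.fst hcon).symm
        have h2 : (i0, ν') ≠ (i0, μ) := fun hcon => h (congrArg Prod.snd hcon)
        simp [hxdef, h1, h2, h]
    simp only [hx1, hx2]
    have hpt2 : ∀ ν' : e, (if ν' = μ then c else 0) * star (if ν' = μ then c else 0)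
        = if ν' = μ then c * star c else 0 := by
      intro ν'
      by_cases h : ν' = μ <;> simp [h]
    simp only [hpt2]
    rw [Finset.sum_ite_eq' Finset.univ μ fun _ => c * star c]
    simp [hcstar, hcc]
  rw [hRHS] at hb
  simp only [hLHS] at hb
  rw [← Finset.sum_mul] at hb
  have hab : ∑ ν' : e, a ν' * star (b ν') = 1 := by
    field_simp at hb
    simpa [Complex.star_def] using hb
  have hba : ∑ ν' : e, b ν' * star (a ν') = 1 := by
    have := congrArg star hab
    rw [star_sum] at this
    simpa [star_mul', mul_comm] using this
  have hdiff : ∑ ν' : e, (a ν' - b ν') * star (a ν' - b ν') = 0 := by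
    have : ∀ ν' : e, (a ν' - b ν') * star (a ν' - b ν')
        = a ν' * star (a ν') + b ν' * star (b ν')
          - a ν' * star (b ν') - b ν' * star (a ν') := by
      intro ν'
      simp only [star_sub]
      ring
    simp only [this]
    rw [Finset.sum_sub_distrib, Finset.sum_sub_distrib, Finset.sum_add_distrib,
      haa, hbb, hab, hba]
    norm_num
  have hterm := (Finset.sum_eq_zero_iff_of_nonneg
    (fun ν' _ => mul_star_self_nonneg (a ν' - b ν'))).mp hdiff ν (Finset.mem_univ ν)
  rcases mul_eq_zero.mp hterm with h | h
  · exact sub_eq_zero.mp h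
  · exact sub_eq_zero.mp (star_eq_zero.mp h)


end Helpers

/-- `Tr_e(UρU†) = Tr_e(VρV†)` for all density matrices `ρ` iff
`U = (1_s ⊗ Φ) V` for some unitary `Φ` on the environment. -/
theorem stmt0 {s e : Type*} [Fintype s] [Fintype e] [DecidableEq s] [DecidableEq e]
    (U V : Matrix (s × e) (s × e) ℂ)
    (hU : U ∈ Matrix.unitaryGroup (s × e) ℂ) (hV : V ∈ Matrix.unitaryGroup (s × e) ℂ) :
    (∀ ρ : Matrix (s × e) (s × e) ℂ, IsDensity ρ →
        ptraceE (U * ρ * Uᴴ) = ptraceE (V * ρ * Vᴴ)) ↔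
      ∃ Φ ∈ Matrix.unitaryGroup e ℂ, U = ((1 : Matrix s s ℂ) ⊗ₖ Φ) * V := by
  have hU2 : Uᴴ * U = 1 := by
    have := Matrix.mem_unitaryGroup_iff'.mp hU
    rwa [star_eq_conjTranspose] at this
  have hV2 : Vᴴ * V = 1 := by
    have := Matrix.mem_unitaryGroup_iff'.mp hV
    rwa [star_eq_conjTranspose] at this
  have hV1 : V * Vᴴ = 1 := by
    have := Matrix.mem_unitaryGroup_iff.mp hV
    rwa [star_eq_conjTranspose] at this
  constructor
  · intro h
    by_cases hs : Nonempty s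
    · obtain ⟨i0⟩ := hs
      set W := U * Vᴴ with hWdef
      have hW2 : Wᴴ * W = 1 := by
        rw [hWdef, conjTranspose_mul, conjTranspose_conjTranspose,
          mul_assoc, ← mul_assoc Uᴴ U, hU2, one_mul, hV1]
      have hA : ∀ ρ : Matrix (s × e) (s × e) ℂ, IsDensity ρ →
          ptraceE (W * ρ * Wᴴ) = ptraceE ρ := by
        intro ρ hρ
        have hd : IsDensity (Vᴴ * ρ * V) := by
          refine ⟨hρ.1.conjTranspose_mul_mul_same V, ?_⟩
          rw [Matrix.trace_mul_cycle, hV1, one_mul, hρ.2]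
        have h1 := h (Vᴴ * ρ * V) hd
        have e1 : U * (Vᴴ * ρ * V) * Uᴴ = W * ρ * Wᴴ := by
          rw [hWdef, conjTranspose_mul, conjTranspose_conjTranspose]
          simp only [mul_assoc]
        have e2 : V * (Vᴴ * ρ * V) * Vᴴ = ρ := by
          rw [show V * (Vᴴ * ρ * V) * Vᴴ = (V * Vᴴ) * ρ * (V * Vᴴ) by simp only [mul_assoc], hV1]
          simp
        rw [e1, e2] at h1
        exact h1
      have hz : ∀ (i j : s) (μ ν : e), j ≠ i → W (j, ν) (i, μ) = 0 :=
        fun i j μ ν hij => hzero_of_hA hA i j μ ν hij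
      set Φ : Matrix e e ℂ := Matrix.of fun ν μ => W (i0, ν) (i0, μ) with hΦdef
      have hΦ1 : Φᴴ * Φ = 1 := by
        ext μ μ'
        rw [mul_apply, one_apply]
        simp only [hΦdef, conjTranspose_apply, of_apply]
        exact hcol2 hW2 hz i0 μ μ'
      refine ⟨Φ, Matrix.mem_unitaryGroup_iff'.mpr (by rw [star_eq_conjTranspose]; exact hΦ1), ?_⟩
      have hWk : W = (1 : Matrix s s ℂ) ⊗ₖ Φ := by
        ext ⟨j, ν⟩ ⟨i, μ⟩
        by_cases hji : j = i
        · subst hji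
          rw [hsame_of_hA hA hW2 j i0 μ ν]
          simp [hΦdef, kroneckerMap_apply, one_apply]
        · rw [hz i j μ ν hji]
          simp [kroneckerMap_apply, one_apply, hji]
      rw [← hWk, hWdef, mul_assoc, hV2, mul_one]
    · have : IsEmpty s := not_nonempty_iff.mp hs
      refine ⟨1, Matrix.mem_unitaryGroup_iff.mpr (by simp), ?_⟩
      ext ⟨p1, p2⟩ q
      exact isEmptyElim p1
  · rintro ⟨Φ, hΦ, rfl⟩ ρ hρ
    have hΦ1 : Φᴴ * Φ = 1 := by
      have := Matrix.mem_unitaryGroup_iff'.mp hΦ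
      rwa [star_eq_conjTranspose] at this
    rw [show ((1 : Matrix s s ℂ) ⊗ₖ Φ) * V * ρ * (((1 : Matrix s s ℂ) ⊗ₖ Φ) * V)ᴴ
        = ((1 : Matrix s s ℂ) ⊗ₖ Φ) * (V * ρ * Vᴴ) * ((1 : Matrix s s ℂ) ⊗ₖ Φ)ᴴ by
      rw [conjTranspose_mul]; simp only [mul_assoc]]
    exact ptraceE_conj_kron Φ hΦ1 (V * ρ * Vᴴ)
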